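/- In a compact positive SKT manifold, the Laplacians of the three operators in the decomposition d^H = δ₊^N + δ̄₊^N + đ₋ coincide up to factor: Δ_{δ₊^N} = Δ_{δ̄₊^N} = (1/4)Δ^H, where (δ₊^N)* = −δ̄₊^N. Consequently the d^H-Laplacian preserves each subspace 𝒲₊^{k,l} of the (ℤ × ℤ₂)-grading of forms, and the d^H-cohomology inherits a ℤ × ℤ₂ grading. -/

import Mathlib

/-!
STATEMENT 19: On a compact positive SKT manifold the twisted differential
decomposes as `d^H = δ₊^N + δ̄₊^N + đ₋` with respect to the `ℤ × ℤ₂`-grading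
`𝒲₊^{k,l}` of forms, with formal adjoints `(δ₊^N)* = −δ̄₊^N` and `đ₋* = đ₋`.
Then the Laplacians satisfy `Δ_{δ₊^N} = Δ_{δ̄₊^N} = (1/4)Δ^H`; consequently
`Δ^H` preserves each `𝒲₊^{k,l}` and the `d^H`-cohomology inherits a
`ℤ × ℤ₂`-grading.

`Λ` abstracts the space of complex forms, `W k l` the subspace `𝒲₊^{k,l}`
(`k ∈ ℤ`, `l ∈ ℤ₂` represented by `Bool`), and `a = δ₊^N`, `b = δ̄₊^N`,
`c = đ₋` the three components of `d^H`.
-/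

/-- In an internal direct sum, if five elements lying in five components with
pairwise distinct indices sum to zero, each of them is zero. -/
lemma sum5_zero {ι : Type*} [DecidableEq ι] {Λ : Type*} [AddCommGroup Λ] [Module ℂ Λ]
    (W : ι → Submodule ℂ Λ) (hW : DirectSum.IsInternal W)
    {i₁ i₂ i₃ i₄ i₅ : ι}
    (h12 : i₁ ≠ i₂) (h13 : i₁ ≠ i₃) (h14 : i₁ ≠ i₄) (h15 : i₁ ≠ i₅)
    (h23 : i₂ ≠ i₃) (h24 : i₂ ≠ i₄) (h25 : i₂ ≠ i₅)
    (h34 : i₃ ≠ i₄) (h35 : i₃ ≠ i₅) (h45 : i₄ ≠ i₅)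
    {x₁ x₂ x₃ x₄ x₅ : Λ}
    (m₁ : x₁ ∈ W i₁) (m₂ : x₂ ∈ W i₂) (m₃ : x₃ ∈ W i₃) (m₄ : x₄ ∈ W i₄) (m₅ : x₅ ∈ W i₅)
    (hs : x₁ + x₂ + x₃ + x₄ + x₅ = 0) :
    x₁ = 0 ∧ x₂ = 0 ∧ x₃ = 0 ∧ x₄ = 0 ∧ x₅ = 0 := by
  set z : DirectSum ι (fun i => W i) :=
    DirectSum.of (fun i => W i) i₁ ⟨x₁, m₁⟩ + DirectSum.of (fun i => W i) i₂ ⟨x₂, m₂⟩ +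
    DirectSum.of (fun i => W i) i₃ ⟨x₃, m₃⟩ + DirectSum.of (fun i => W i) i₄ ⟨x₄, m₄⟩ +
    DirectSum.of (fun i => W i) i₅ ⟨x₅, m₅⟩ with hz
  have hcoe : DirectSum.coeAddMonoidHom W z = 0 := by
    simp only [hz, map_add, DirectSum.coeAddMonoidHom_of]
    exact hs
  have hz0 : z = 0 := hW.injective (by simpa using hcoe)
  have key : ∀ j : ι, (z j : Λ) = ((0 : DirectSum ι (fun i => W i)) j : Λ) := by
    intro j; rw [hz0]
  refine ⟨?_, ?_, ?_, ?_, ?_⟩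
  · have := key i₁
    simpa [hz, DirectSum.add_apply, DirectSum.of_eq_same,
      DirectSum.of_eq_of_ne _ _ _ h12, DirectSum.of_eq_of_ne _ _ _ h13,
      DirectSum.of_eq_of_ne _ _ _ h14, DirectSum.of_eq_of_ne _ _ _ h15] using this
  · have := key i₂
    simpa [hz, DirectSum.add_apply, DirectSum.of_eq_same,
      DirectSum.of_eq_of_ne _ _ _ h12.symm, DirectSum.of_eq_of_ne _ _ _ h23,
      DirectSum.of_eq_of_ne _ _ _ h24, DirectSum.of_eq_of_ne _ _ _ h25] using this
  · have := key i₃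
    simpa [hz, DirectSum.add_apply, DirectSum.of_eq_same,
      DirectSum.of_eq_of_ne _ _ _ h13.symm, DirectSum.of_eq_of_ne _ _ _ h23.symm,
      DirectSum.of_eq_of_ne _ _ _ h34, DirectSum.of_eq_of_ne _ _ _ h35] using this
  · have := key i₄
    simpa [hz, DirectSum.add_apply, DirectSum.of_eq_same,
      DirectSum.of_eq_of_ne _ _ _ h14.symm, DirectSum.of_eq_of_ne _ _ _ h24.symm,
      DirectSum.of_eq_of_ne _ _ _ h34.symm, DirectSum.of_eq_of_ne _ _ _ h45] using this
  · have := key i₅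
    simpa [hz, DirectSum.add_apply, DirectSum.of_eq_same,
      DirectSum.of_eq_of_ne _ _ _ h15.symm, DirectSum.of_eq_of_ne _ _ _ h25.symm,
      DirectSum.of_eq_of_ne _ _ _ h35.symm, DirectSum.of_eq_of_ne _ _ _ h45.symm] using this

/-- An endomorphism vanishing on every member of an internal family of
submodules is zero. -/
lemma vanish_ext {ι : Type*} [DecidableEq ι] {Λ : Type*} [AddCommGroup Λ] [Module ℂ Λ]
    (W : ι → Submodule ℂ Λ) (hW : DirectSum.IsInternal W)
    (T : Module.End ℂ Λ) (h : ∀ i, ∀ φ ∈ W i, T φ = 0) : T = 0 := by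
  ext x
  have hx : x ∈ (⊤ : Submodule ℂ Λ) := trivial
  rw [← hW.submodule_iSup_eq_top] at hx
  simp only [LinearMap.zero_apply]
  exact Submodule.iSup_induction (motive := fun x => T x = 0) W hx
    (fun i y hy => h i y hy) (map_zero T)
    (fun y z hy hz => by show T (y + z) = 0; rw [map_add]; rw [hy, hz, add_zero])

theorem SKT_laplacian_identity
    {Λ : Type*} [AddCommGroup Λ] [Module ℂ Λ]
    (W : ℤ → Bool → Submodule ℂ Λ)
    (hW : DirectSum.IsInternal (fun kl : ℤ × Bool => W kl.1 kl.2))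
    (a b c : Module.End ℂ Λ)
    -- the components of `d^H` shift the grading by `+2`, `−2`, `0`
    (ha : ∀ k l, ∀ φ ∈ W k l, a φ ∈ W (k + 2) (!l))
    (hb : ∀ k l, ∀ φ ∈ W k l, b φ ∈ W (k - 2) (!l))
    (hc : ∀ k l, ∀ φ ∈ W k l, c φ ∈ W k (!l))
    -- `d^H = δ₊^N + δ̄₊^N + đ₋` and `(d^H)² = 0`
    (dH : Module.End ℂ Λ) (hdH : dH = a + b + c)
    (hd2 : dH * dH = 0) :
    -- formal adjoints: `(δ₊^N)* = −δ̄₊^N`, `(δ̄₊^N)* = −δ₊^N`, `đ₋* = đ₋`,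
    -- hence `d^{H*} = −δ̄₊^N − δ₊^N + đ₋`
    let aStar : Module.End ℂ Λ := -b
    let bStar : Module.End ℂ Λ := -a
    let dHStar : Module.End ℂ Λ := aStar + bStar + c
    let Δa : Module.End ℂ Λ := a * aStar + aStar * a
    let Δb : Module.End ℂ Λ := b * bStar + bStar * b
    let ΔH : Module.End ℂ Λ := dH * dHStar + dHStar * dH
    -- `Δ_{δ₊^N} = Δ_{δ̄₊^N} = (1/4) Δ^H`
    Δa = Δb ∧ Δa = (4 : ℂ)⁻¹ • ΔH ∧
    -- consequently `Δ^H` preserves each `𝒲₊^{k,l}`, whence the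
    -- `ℤ × ℤ₂`-grading of the `d^H`-cohomology
    (∀ k l, ∀ φ ∈ W k l, ΔH φ ∈ W k l) := by
  intro aStar bStar dHStar Δa Δb ΔH
  -- pointwise vanishing of the graded components of `(d^H)²`
  have hvan : ∀ k l, ∀ φ ∈ W k l,
      a (a φ) = 0 ∧ b (b φ) = 0 ∧ a (b φ) + b (a φ) + c (c φ) = 0 := by
    intro k l φ hφ
    have h1 : a (a φ) ∈ W (k + 4) l := by
      have := ha _ _ _ (ha k l φ hφ)
      rwa [show k + 2 + 2 = k + 4 by ring, Bool.not_not] at this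
    have h2 : a (b φ) + b (a φ) + c (c φ) ∈ W k l := by
      have e1 : a (b φ) ∈ W k l := by
        have := ha _ _ _ (hb k l φ hφ)
        rwa [show k - 2 + 2 = k by ring, Bool.not_not] at this
      have e2 : b (a φ) ∈ W k l := by
        have := hb _ _ _ (ha k l φ hφ)
        rwa [show k + 2 - 2 = k by ring, Bool.not_not] at this
      have e3 : c (c φ) ∈ W k l := by
        have := hc _ _ _ (hc k l φ hφ)
        rwa [Bool.not_not] at this
      exact add_mem (add_mem e1 e2) e3
    have h3 : b (b φ) ∈ W (k - 4) l := by
      have := hb _ _ _ (hb k l φ hφ)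
      rwa [show k - 2 - 2 = k - 4 by ring, Bool.not_not] at this
    have h4 : a (c φ) + c (a φ) ∈ W (k + 2) l := by
      have e1 : a (c φ) ∈ W (k + 2) l := by
        have := ha _ _ _ (hc k l φ hφ)
        rwa [Bool.not_not] at this
      have e2 : c (a φ) ∈ W (k + 2) l := by
        have := hc _ _ _ (ha k l φ hφ)
        rwa [Bool.not_not] at this
      exact add_mem e1 e2
    have h5 : b (c φ) + c (b φ) ∈ W (k - 2) l := by
      have e1 : b (c φ) ∈ W (k - 2) l := by
        have := hb _ _ _ (hc k l φ hφ)
        rwa [Bool.not_not] at this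
      have e2 : c (b φ) ∈ W (k - 2) l := by
        have := hc _ _ _ (hb k l φ hφ)
        rwa [Bool.not_not] at this
      exact add_mem e1 e2
    have hsum : a (a φ) + (a (b φ) + b (a φ) + c (c φ)) + b (b φ)
        + (a (c φ) + c (a φ)) + (b (c φ) + c (b φ)) = 0 := by
      have h0 : (dH * dH) φ = 0 := by rw [hd2]; rfl
      rw [Module.End.mul_apply, hdH] at h0
      simp only [LinearMap.add_apply, map_add] at h0
      have := h0
      abel_nf at this ⊢
      exact this
    obtain ⟨e1, e2, e3, -, -⟩ :=
      sum5_zero (fun kl : ℤ × Bool => W kl.1 kl.2) hW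
        (i₁ := (k + 4, l)) (i₂ := (k, l)) (i₃ := (k - 4, l))
        (i₄ := (k + 2, l)) (i₅ := (k - 2, l))
        (by intro h; rw [Prod.ext_iff] at h; omega)
        (by intro h; rw [Prod.ext_iff] at h; omega)
        (by intro h; rw [Prod.ext_iff] at h; omega)
        (by intro h; rw [Prod.ext_iff] at h; omega)
        (by intro h; rw [Prod.ext_iff] at h; omega)
        (by intro h; rw [Prod.ext_iff] at h; omega)
        (by intro h; rw [Prod.ext_iff] at h; omega)
        (by intro h; rw [Prod.ext_iff] at h; omega)
        (by intro h; rw [Prod.ext_iff] at h; omega)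
        (by intro h; rw [Prod.ext_iff] at h; omega)
        h1 h2 h3 h4 h5 hsum
    exact ⟨e1, e3, e2⟩
  -- operator identities
  have A2 : a * a = 0 :=
    vanish_ext _ hW _ (fun kl φ hφ => (hvan kl.1 kl.2 φ hφ).1)
  have B2 : b * b = 0 :=
    vanish_ext _ hW _ (fun kl φ hφ => (hvan kl.1 kl.2 φ hφ).2.1)
  have MID : a * b + b * a + c * c = 0 :=
    vanish_ext _ hW _ (fun kl φ hφ => by
      simpa [LinearMap.add_apply, Module.End.mul_apply] using (hvan kl.1 kl.2 φ hφ).2.2)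
  have hΔa : a * -b + -b * a = c * c := by
    have e : a * -b + -b * a = -(a * b + b * a + c * c) + c * c := by noncomm_ring
    rw [e, MID, neg_zero, zero_add]
  have main : dH * (-b + -a + c) + (-b + -a + c) * dH = (4 : ℂ) • (c * c) := by
    have e1 : dH * (-b + -a + c) + (-b + -a + c) * dH
        = (c * c + c * c + c * c + c * c) - 2 * (a * a) - 2 * (b * b)
          - 2 * (a * b + b * a + c * c) := by
      rw [hdH]; noncomm_ring
    have e2 : (4 : ℂ) • (c * c) = c * c + c * c + c * c + c * c := by
      rw [show (4 : ℂ) = 1 + 1 + 1 + 1 by norm_num, add_smul, add_smul, add_smul, one_smul]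
    rw [e1, A2, B2, MID, e2]
    simp
  refine ⟨?_, ?_, ?_⟩
  · show a * -b + -b * a = b * -a + -a * b
    noncomm_ring
  · show a * -b + -b * a = (4 : ℂ)⁻¹ • (dH * (-b + -a + c) + (-b + -a + c) * dH)
    rw [main, smul_smul, inv_mul_cancel₀ (by norm_num : (4 : ℂ) ≠ 0), one_smul]
    exact hΔa
  · intro k l φ hφ
    show (dH * (-b + -a + c) + (-b + -a + c) * dH) φ ∈ W k l
    rw [main]
    rw [LinearMap.smul_apply, Module.End.mul_apply]
    refine Submodule.smul_mem _ _ ?_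
    have := hc _ _ _ (hc k l φ hφ)
    rwa [Bool.not_not] at this
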